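/- Let A be a matrix whose rows lie in the dual code of an [n,k,d]_q linear code C, and let 1 ≤ l ≤ min{d, n-k} - 1. If for every S ⊆ {0,...,n-1} with |S| = l the submatrix A(S) (delete rows of A with a nonzero entry in S, then delete the columns in S) has rank n-k-l over F_q, then: (a) for every S' ⊆ {0,...,n-1} with |S'| ≤ l, rank(A(S')) = n-k-|S'|, and in particular (b) rank(A) = n-k, so A is a parity-check matrix for C. -/

import Mathlib

variable {F : Type} [Field F] [Fintype F] [DecidableEq F]

/-- The dual code of a linear code `C`. -/
def dualCode {ι : Type} [Fintype ι] (C : Submodule F (ι → F)) : Submodule F (ι → F) where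
  carrier := {x | ∀ c ∈ C, ∑ i, x i * c i = 0}
  add_mem' := by
    intro a b ha hb c hc
    simp only [Set.mem_setOf_eq, Pi.add_apply] at *
    simp [add_mul, Finset.sum_add_distrib, ha c hc, hb c hc]
  zero_mem' := by
    intro c hc
    simp
  smul_mem' := by
    intro a x hx c hc
    simp only [Set.mem_setOf_eq, Pi.smul_apply, smul_eq_mul, mul_assoc,
      ← Finset.mul_sum, hx c hc, mul_zero]

/-- `d` is the minimum distance of the code `D`. -/
def IsMinDist {ι : Type} [Fintype ι] (D : Submodule F (ι → F)) (d : ℕ) : Prop :=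
  (∀ c ∈ D, c ≠ 0 → d ≤ hammingNorm c) ∧ ∃ c ∈ D, c ≠ 0 ∧ hammingNorm c = d

/-- `H(S)`: delete the rows of `H` with a nonzero entry in `S`, and the columns in `S`. -/
def subMat {m n : ℕ} (H : Matrix (Fin m) (Fin n) F) (S : Finset (Fin n)) :
    Matrix {i : Fin m // ∀ j ∈ S, H i j = 0} {j : Fin n // j ∉ S} F :=
  Matrix.of fun i j => H i.1 j.1

open Module Submodule Set Matrix

lemma mem_dualCode {ι : Type} [Fintype ι] {D : Submodule F (ι → F)} {x : ι → F} :
    x ∈ dualCode D ↔ ∀ c ∈ D, ∑ i, x i * c i = 0 := Iff.rfl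

noncomputable def myPairing (F : Type) [Field F] (ι : Type) [Fintype ι] :
    (ι → F) →ₗ[F] Module.Dual F (ι → F) :=
  LinearMap.mk₂ F (fun x y => ∑ i, x i * y i)
    (fun x x' y => by simp [add_mul, Finset.sum_add_distrib])
    (fun a x y => by simp [Finset.mul_sum, mul_assoc])
    (fun x y y' => by simp [mul_add, Finset.sum_add_distrib])
    (fun a x y => by simp [Finset.mul_sum, mul_left_comm])

lemma myPairing_inj (ι : Type) [Fintype ι] [DecidableEq ι] :
    Function.Injective (myPairing F ι) := by
  intro x y h
  funext i
  have h2 := congrArg (fun f => f (Pi.single i 1)) h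
  simpa [myPairing, LinearMap.mk₂_apply, Pi.single_apply, mul_ite,
    Finset.sum_ite_eq'] using h2

lemma myPairing_surj (ι : Type) [Fintype ι] [DecidableEq ι] :
    Function.Surjective (myPairing F ι) :=
  (LinearMap.injective_iff_surjective_of_finrank_eq_finrank
    Subspace.dual_finrank_eq.symm).mp (myPairing_inj ι)

lemma finrank_dualCode {ι : Type} [Fintype ι] [DecidableEq ι] (D : Submodule F (ι → F)) :
    finrank F (dualCode D) = Fintype.card ι - finrank F D := by
  classical
  let f : (ι → F) →ₗ[F] Module.Dual F D := (D.subtype.dualMap).comp (myPairing F ι)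
  have hker : LinearMap.ker f = dualCode D := by
    ext x
    rw [LinearMap.mem_ker, mem_dualCode]
    constructor
    · intro h c hc
      have := congrArg (fun φ => φ (⟨c, hc⟩ : D)) h
      simpa [f, myPairing, LinearMap.mk₂_apply] using this
    · intro h
      ext c
      simpa [f, myPairing, LinearMap.mk₂_apply] using h c.1 c.2
  have hrange : LinearMap.range f = ⊤ := by
    rw [LinearMap.range_eq_top]
    intro φ
    obtain ⟨g, hg⟩ := LinearMap.exists_extend φ
    obtain ⟨x, hx⟩ := myPairing_surj (F := F) ι g
    refine ⟨x, ?_⟩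
    ext c
    have := congrArg (fun ψ => ψ c) (hg)
    simp only [LinearMap.comp_apply] at this ⊢
    rw [show f x c = (myPairing F ι x) c.1 from rfl, hx]
    simpa using this
  have hRN := LinearMap.finrank_range_add_finrank_ker f
  rw [hker, hrange] at hRN
  have h1 : finrank F (⊤ : Submodule F (Module.Dual F D)) = finrank F D := by
    rw [finrank_top]; exact Subspace.dual_finrank_eq
  have h2 : finrank F (ι → F) = Fintype.card ι := Module.finrank_fintype_fun_eq_card F
  have h3 : finrank F D ≤ Fintype.card ι := by
    have := Submodule.finrank_le D
    omega
  omega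

theorem test : True := trivial

lemma rank_submatrix' {m m' n n' : Type} [Fintype m] [Fintype m'] [Fintype n] [Fintype n']
    (A : Matrix m n F) (e₁ : m' ≃ m) (e₂ : n' ≃ n) :
    (A.submatrix e₁ e₂).rank = A.rank := by
  rw [Matrix.rank, Matrix.rank, Matrix.mulVecLin_submatrix, LinearMap.range_comp,
    LinearMap.range_comp,
    show LinearMap.funLeft F F e₂.symm = (LinearEquiv.funCongrLeft F F e₂.symm : _) from rfl,
    LinearEquiv.range, Submodule.map_top,
    show LinearMap.funLeft F F e₁ = (LinearEquiv.funCongrLeft F F e₁ : _) from rfl]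
  exact LinearEquiv.finrank_map_eq _ _

lemma rank_subMat_le {n mrows k d : ℕ} (C : Submodule F (Fin n → F)) (hk : finrank F C = k)
    (hd : ∀ c ∈ C, c ≠ 0 → d ≤ hammingNorm c)
    (A : Matrix (Fin mrows) (Fin n) F) (hA : ∀ i, A i ∈ dualCode C)
    (S : Finset (Fin n)) (hS : S.card < d) :
    (subMat A S).rank ≤ n - S.card - k := by
  classical
  let restr : (Fin n → F) →ₗ[F] ({j : Fin n // j ∉ S} → F) :=
    LinearMap.funLeft F F (fun j => j.1)
  let g : C →ₗ[F] ({j : Fin n // j ∉ S} → F) := restr.comp C.subtype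
  have hginj : Function.Injective g := by
    have hz : ∀ c : C, g c = 0 → c = 0 := by
      intro c hc
      by_contra hne
      have h1 : hammingNorm (c : Fin n → F) ≤ S.card := by
        apply Finset.card_le_card
        intro i hi
        rw [Finset.mem_filter] at hi
        by_contra hiS
        exact hi.2 (congrFun hc ⟨i, hiS⟩)
      have h2 : d ≤ hammingNorm (c : Fin n → F) :=
        hd c.1 c.2 (fun h => hne (Subtype.ext h))
      omega
    exact LinearMap.ker_eq_bot.mp (LinearMap.ker_eq_bot'.mpr hz)
  have hP : finrank F (LinearMap.range g) = k := by
    rw [LinearMap.finrank_range_of_inj hginj, hk]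
  have hrows : Submodule.span F (Set.range (subMat A S)) ≤ dualCode (LinearMap.range g) := by
    rw [Submodule.span_le]
    rintro - ⟨i, rfl⟩
    rw [SetLike.mem_coe, mem_dualCode]
    rintro - ⟨c, rfl⟩
    have h0 : ∑ j : Fin n, A i.1 j * c.1 j = 0 := hA i.1 c.1 c.2
    rw [← Finset.sum_add_sum_compl S] at h0
    have hz : ∑ j ∈ S, A i.1 j * c.1 j = 0 :=
      Finset.sum_eq_zero fun j hj => by rw [i.2 j hj, zero_mul]
    rw [hz, zero_add] at h0
    rw [show (∑ j : {j : Fin n // j ∉ S}, subMat A S i j * g c j)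
        = ∑ j ∈ Sᶜ, A i.1 j * c.1 j from
      (Finset.sum_subtype Sᶜ (fun x => Finset.mem_compl) (fun j => A i.1 j * c.1 j)).symm]
    exact h0
  have hcard : Fintype.card {j : Fin n // j ∉ S} = n - S.card := by
    simp [Fintype.card_subtype_compl]
  calc (subMat A S).rank
      = finrank F (Submodule.span F (Set.range (subMat A S))) :=
        Matrix.rank_eq_finrank_span_row _
    _ ≤ finrank F (dualCode (LinearMap.range g)) := Submodule.finrank_mono hrows
    _ = Fintype.card {j : Fin n // j ∉ S} - k := by rw [finrank_dualCode, hP]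
    _ = n - S.card - k := by rw [hcard]

lemma subMat_insert {n mrows : ℕ} (A : Matrix (Fin mrows) (Fin n) F)
    (S' : Finset (Fin n)) (x : Fin n) (hx : x ∉ S') :
    (subMat A (insert x S')).rank ≤ (subMat A S').rank ∧
    ((subMat A (insert x S')).rank = (subMat A S').rank →
      ∀ i, subMat A S' i ⟨x, hx⟩ = 0) := by
  classical
  let ρ : {i : Fin mrows // ∀ j ∈ insert x S', A i j = 0} →
      {i : Fin mrows // ∀ j ∈ S', A i j = 0} :=
    fun i => ⟨i.1, fun j hj => i.2 j (Finset.mem_insert_of_mem hj)⟩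
  let N := (subMat A S').submatrix ρ id
  have hNrank : N.rank = (subMat A (insert x S')).rank := by
    rw [Matrix.rank_eq_finrank_span_cols, Matrix.rank_eq_finrank_span_cols]
    have hspans : Submodule.span F (Set.range Nᵀ)
        = Submodule.span F (Set.range (subMat A (insert x S'))ᵀ) := by
      apply le_antisymm
      · rw [Submodule.span_le]
        rintro - ⟨j, rfl⟩
        by_cases hj : j.1 ∈ insert x S'
        · have hjx : j.1 = x := by
            rcases Finset.mem_insert.mp hj with h | h
            · exact h
            · exact absurd h j.2
          have hzero : Nᵀ j = 0 := by
            funext i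
            show A i.1 j.1 = 0
            rw [hjx]
            exact i.2 x (Finset.mem_insert_self x S')
          rw [hzero]
          exact Submodule.zero_mem _
        · exact Submodule.subset_span ⟨⟨j.1, hj⟩, rfl⟩
      · rw [Submodule.span_le]
        rintro - ⟨j, rfl⟩
        exact Submodule.subset_span
          ⟨⟨j.1, fun h => j.2 (Finset.mem_insert_of_mem h)⟩, rfl⟩
    exact congrArg (fun s : Submodule F ({i : Fin mrows // ∀ j ∈ insert x S', A i j = 0} → F) => finrank F s) hspans
  have hsub : Set.range N ⊆ Set.range (subMat A S') := by
    rintro - ⟨i, rfl⟩; exact ⟨ρ i, rfl⟩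
  have hNle : N.rank ≤ (subMat A S').rank := by
    rw [Matrix.rank_eq_finrank_span_row, Matrix.rank_eq_finrank_span_row]
    exact Submodule.finrank_mono (Submodule.span_mono hsub)
  refine ⟨hNrank ▸ hNle, ?_⟩
  intro heq i
  have hspan : Submodule.span F (Set.range N) = Submodule.span F (Set.range (subMat A S')) := by
    apply Submodule.eq_of_le_of_finrank_le (Submodule.span_mono hsub)
    change finrank F (span F (range (subMat A S').row)) ≤ finrank F (span F (range N.row))
    rw [← Matrix.rank_eq_finrank_span_row, ← Matrix.rank_eq_finrank_span_row, hNrank, heq]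
  let ev : ({j : Fin n // j ∉ S'} → F) →ₗ[F] F := LinearMap.proj ⟨x, hx⟩
  have hvanish : Submodule.span F (Set.range N) ≤ LinearMap.ker ev := by
    rw [Submodule.span_le]
    rintro - ⟨i', rfl⟩
    rw [SetLike.mem_coe, LinearMap.mem_ker]
    exact i'.2 x (Finset.mem_insert_self x S')
  have hmem : subMat A S' i ∈ Submodule.span F (Set.range N) := by
    rw [hspan]
    exact Submodule.subset_span ⟨i, rfl⟩
  exact hvanish hmem

/-- If a matrix `A` with rows in `C⊥` satisfies `rank A(S) = n-k-l` for every `l`-subset `S`,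
then `rank A(S') = n-k-|S'|` for every subset `S'` of size at most `l`, and `A` has rank
`n-k`, i.e. `A` is a parity-check matrix for `C`. -/
theorem stmt_9 (n k d l mrows : ℕ)
    (C : Submodule F (Fin n → F)) (hk : Module.finrank F C = k) (hd : IsMinDist C d)
    (hl1 : 1 ≤ l) (hl : l ≤ min d (n - k) - 1)
    (A : Matrix (Fin mrows) (Fin n) F) (hA : ∀ i, A i ∈ dualCode C)
    (hsep : ∀ S : Finset (Fin n), S.card = l → (subMat A S).rank = n - k - l) :
    (∀ S' : Finset (Fin n), S'.card ≤ l → (subMat A S').rank = n - k - S'.card) ∧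
      A.rank = n - k ∧
      Submodule.span F (Set.range fun i => A i) = dualCode C := by
  classical
  have hkn : k ≤ n := by
    have h1 := Submodule.finrank_le C
    rw [hk, Module.finrank_fintype_fun_eq_card, Fintype.card_fin] at h1
    exact h1
  have hld : l + 1 ≤ d := by omega
  have hlnk : l + 1 ≤ n - k := by omega
  have key : ∀ t : ℕ, ∀ S' : Finset (Fin n), S'.card + t = l →
      (subMat A S').rank = n - k - S'.card := by
    intro t
    induction t with
    | zero =>
      intro S' hS'
      have hc : S'.card = l := by omega
      rw [hc, hsep S' hc]
    | succ t ih =>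
      intro S' hS'
      have hcard : S'.card < n := by omega
      have upper : (subMat A S').rank ≤ n - k - S'.card := by
        have h := rank_subMat_le C hk hd.1 A hA S' (by omega)
        omega
      have hlow : ∀ x, x ∉ S' → (subMat A (insert x S')).rank = n - k - (S'.card + 1) := by
        intro x hx
        have h := ih (insert x S') (by rw [Finset.card_insert_of_notMem hx]; omega)
        rwa [Finset.card_insert_of_notMem hx] at h
      obtain ⟨x, hx⟩ : ∃ x, x ∉ S' := by
        by_contra h
        push_neg at h
        have huniv : S' = Finset.univ := Finset.eq_univ_iff_forall.mpr h
        rw [huniv, Finset.card_univ, Fintype.card_fin] at hcard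
        omega
      have hle : (subMat A (insert x S')).rank ≤ (subMat A S').rank :=
        (subMat_insert A S' x hx).1
      have lower : n - k - (S'.card + 1) ≤ (subMat A S').rank := by
        rw [← hlow x hx]; exact hle
      by_contra hne
      have hMrank : (subMat A S').rank = n - k - (S'.card + 1) := by omega
      have hzero : ∀ (i : {i : Fin mrows // ∀ j ∈ S', A i j = 0})
          (j : {j : Fin n // j ∉ S'}), subMat A S' i j = 0 := by
        intro i j
        exact (subMat_insert A S' j.1 j.2).2 (by rw [hlow j.1 j.2, hMrank]) i
      have hzrank : (subMat A S').rank = 0 := by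
        have hM : subMat A S' = 0 := by
          ext i j
          exact hzero i j
        rw [hM, Matrix.rank_zero]
      omega
  have part1 : ∀ S' : Finset (Fin n), S'.card ≤ l →
      (subMat A S').rank = n - k - S'.card :=
    fun S' h => key (l - S'.card) S' (by omega)
  have hempty := part1 ∅ (by simp)
  have hArank : A.rank = n - k := by
    let e₁ : {i : Fin mrows // ∀ j ∈ (∅ : Finset (Fin n)), A i j = 0} ≃ Fin mrows :=
      Equiv.subtypeUnivEquiv (fun i => by simp)
    let e₂ : {j : Fin n // j ∉ (∅ : Finset (Fin n))} ≃ Fin n :=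
      Equiv.subtypeUnivEquiv (fun j => Finset.notMem_empty j)
    have hsm : subMat A ∅ = A.submatrix e₁ e₂ := by ext i j; rfl
    rw [hsm, rank_submatrix'] at hempty
    simpa using hempty
  refine ⟨part1, hArank, ?_⟩
  apply Submodule.eq_of_le_of_finrank_le
  · rw [Submodule.span_le]
    rintro - ⟨i, rfl⟩
    exact hA i
  · have h1 : finrank F (dualCode C) = n - k := by
      rw [finrank_dualCode, hk, Fintype.card_fin]
    have h2 : finrank F (Submodule.span F (Set.range fun i => A i)) = n - k := by
      rw [← hArank, Matrix.rank_eq_finrank_span_row]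
      rfl
    rw [h1, h2]
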